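/- arXiv:2111.12839 — 4 statements merged into one kernel-verified Lean document; each statement's English description precedes it below -/
import Mathlib

section
/- Let b, c be real numbers. Define the aerated Catalan numbers C₀₁ : ℕ → ℕ by C₀₁(μ) = Catalan(μ/2) if μ is even and C₀₁(μ) = 0 if μ is odd, where Catalan(k) is the k-th Catalan number, and define the (0,1)-bc-Motzkin numbers by M̃₀₁(n;b,c) = Σ_{μ=0}^{n} binom(n,μ)·C₀₁(μ)·b^{n−μ}·c^{μ}. Then for every n ≥ 1: M̃₀₁(n;b,c) − b·M̃₀₁(n−1;b,c) = c² · Σ_{α+β=n−2} M̃₀₁(α;b,c)·M̃₀₁(β;b,c), where the sum on the right ranges over pairs of nonnegative integers α, β with α+β = n−2 (and is empty when n = 1). -/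
/-- The aerated Catalan numbers: `C₀₁(μ) = Catalan(μ/2)` if `μ` is even, `0` if odd. -/
def aeratedCatalan (μ : ℕ) : ℕ := if Even μ then catalan (μ / 2) else 0

/-- The `(0,1)`-`bc`-Motzkin numbers:
`M̃₀₁(n; b, c) = ∑_{μ=0}^{n} binom(n,μ) · C₀₁(μ) · b^{n−μ} · c^{μ}`. -/
noncomputable def bcMotzkin01 (b c : ℝ) (n : ℕ) : ℝ :=
  ∑ μ ∈ Finset.range (n + 1),
    (Nat.choose n μ : ℝ) * (aeratedCatalan μ : ℝ) * b ^ (n - μ) * c ^ μ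

open Finset

lemma aeratedCatalan_odd {μ : ℕ} (h : ¬ Even μ) : aeratedCatalan μ = 0 := by
  simp [aeratedCatalan, h]

lemma aeratedCatalan_two_mul (k : ℕ) : aeratedCatalan (2 * k) = catalan k := by
  simp [aeratedCatalan, even_two_mul, Nat.mul_div_cancel_left k (by norm_num : 0 < 2)]

/-- Hockey-stick Vandermonde: `∑_{α=0}^{m} C(α,i) C(m-α,j) = C(m+1, i+j+1)`. -/
lemma hockey (m : ℕ) : ∀ i j : ℕ,
    ∑ α ∈ range (m + 1), (Nat.choose α i) * (Nat.choose (m - α) j)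
      = Nat.choose (m + 1) (i + j + 1) := by
  induction m with
  | zero =>
    intro i j
    rw [Finset.sum_range_one]
    rcases i with _ | i
    · rcases j with _ | j
      · rfl
      · rw [Nat.choose_zero_succ, mul_zero,
          Nat.choose_eq_zero_of_lt (show 1 < 0 + (j+1) + 1 by omega)]
    · rw [Nat.choose_zero_succ, zero_mul,
        Nat.choose_eq_zero_of_lt (show 1 < (i+1) + j + 1 by omega)]
  | succ m ih =>
    intro i j
    rw [Finset.sum_range_succ']
    have h1 : ∀ α ∈ range (m + 1),
        (Nat.choose (α + 1) i) * (Nat.choose (m + 1 - (α + 1)) j)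
          = (Nat.choose (α + 1) i) * (Nat.choose (m - α) j) := by
      intro α hα; congr 2; omega
    rw [Finset.sum_congr rfl h1]
    rcases i with _ | i
    · have : ∀ α ∈ range (m + 1),
          Nat.choose (α + 1) 0 * Nat.choose (m - α) j
            = Nat.choose α 0 * Nat.choose (m - α) j := by intro α _; simp
      rw [Finset.sum_congr rfl this, ih 0 j]
      have hp : (m + 1 + 1).choose (0 + j + 1) = (m+1).choose (0+j) + (m+1).choose (0+j+1) :=
        Nat.choose_succ_succ (m + 1) (0 + j)
      rw [hp]; simp [add_comm]
    · have : ∀ α ∈ range (m + 1),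
          Nat.choose (α + 1) (i + 1) * Nat.choose (m - α) j
            = Nat.choose α i * Nat.choose (m - α) j
              + Nat.choose α (i + 1) * Nat.choose (m - α) j := by
        intro α _; rw [Nat.choose_succ_succ, add_mul]
      rw [Finset.sum_congr rfl this, Finset.sum_add_distrib, ih i j, ih (i+1) j]
      have : Nat.choose 0 (i+1) = 0 := by simp
      rw [this]
      have : m + 1 + 1 = (m + 1) + 1 := rfl
      rw [Nat.choose_succ_succ (m + 1) (i + 1 + j)]
      ring_nf
      congr 1 <;> congr 1 <;> omega

lemma aeratedCatalan_rec (μ : ℕ) :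
    aeratedCatalan (μ + 1)
      = ∑ i ∈ range μ, aeratedCatalan i * aeratedCatalan (μ - 1 - i) := by
  by_cases h : Even (μ + 1)
  · -- μ + 1 even, μ odd, μ = 2m+1
    obtain ⟨m, hm⟩ : ∃ m, μ = 2 * m + 1 := by
      rcases h with ⟨t, ht⟩; exact ⟨t - 1, by omega⟩
    subst hm
    have hL : aeratedCatalan (2 * m + 1 + 1) = catalan (m + 1) := by
      have : 2 * m + 1 + 1 = 2 * (m + 1) := by ring
      rw [this, aeratedCatalan_two_mul]
    rw [hL]
    -- RHS: only even i contribute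
    have hsub : (range (m + 1)).image (2 * ·) ⊆ range (2 * m + 1) := by
      intro x hx
      simp only [mem_image, mem_range] at hx ⊢
      obtain ⟨k, hk, rfl⟩ := hx
      omega
    rw [show  (∑ i ∈ range (2 * m + 1),
          aeratedCatalan i * aeratedCatalan (2 * m + 1 - 1 - i))
        = ∑ i ∈ (range (m + 1)).image (2 * ·),
          aeratedCatalan i * aeratedCatalan (2 * m + 1 - 1 - i) from
      (Finset.sum_subset hsub (by
        intro x hx hnx
        have : ¬ Even x := by
          intro ⟨k, hk⟩
          exact hnx (by
            simp only [mem_image, mem_range]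
            exact ⟨k, by simp only [mem_range] at hx; omega, by omega⟩)
        rw [aeratedCatalan_odd this, zero_mul])).symm]
    rw [Finset.sum_image (by intro a _ b _ hab; simp only at hab; omega)]
    have : ∀ k ∈ range (m + 1),
        aeratedCatalan (2 * k) * aeratedCatalan (2 * m + 1 - 1 - 2 * k)
          = catalan k * catalan (m - k) := by
      intro k hk
      simp only [mem_range] at hk
      rw [show 2 * m + 1 - 1 - 2 * k = 2 * (m - k) by omega,
        aeratedCatalan_two_mul, aeratedCatalan_two_mul]
    rw [Finset.sum_congr rfl this, catalan_succ' m, Finset.Nat.sum_antidiagonal_eq_sum_range_succ_mk]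
  · -- μ + 1 odd: LHS = 0; each RHS term has an odd factor
    rw [aeratedCatalan_odd h]
    have hμ : Even μ := by
      rcases Nat.even_or_odd μ with h' | h'
      · exact h'
      · exact absurd h'.add_one h
    symm
    apply Finset.sum_eq_zero
    intro i hi
    simp only [mem_range] at hi
    rcases Nat.even_or_odd i with hie | hio
    · have : ¬ Even (μ - 1 - i) := by
        rcases hμ with ⟨a, ha⟩; rcases hie with ⟨c, hc⟩
        intro ⟨d, hd⟩; omega
      rw [aeratedCatalan_odd this, mul_zero]
    · rw [aeratedCatalan_odd (Nat.not_even_iff_odd.mpr hio), zero_mul]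

/-- Recursion for the `(0,1)`-`bc`-Motzkin numbers: for every `n ≥ 1`,
`M̃₀₁(n;b,c) − b·M̃₀₁(n−1;b,c) = c² · ∑_{α+β=n−2} M̃₀₁(α;b,c)·M̃₀₁(β;b,c)`,
where the sum ranges over nonnegative integers `α, β` with `α + β = n − 2`
(hence is empty when `n = 1`). -/
theorem bcMotzkin01_recursion (b c : ℝ) (n : ℕ) (hn : 1 ≤ n) :
    bcMotzkin01 b c n - b * bcMotzkin01 b c (n - 1)
      = c ^ 2 * ∑ α ∈ Finset.range (n - 1),
          bcMotzkin01 b c α * bcMotzkin01 b c (n - 2 - α) := by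
  obtain ⟨k, rfl⟩ : ∃ k, n = k + 1 := ⟨n - 1, by omega⟩
  simp only [Nat.add_sub_cancel]
  -- Step A: LHS = ∑_{μ ≤ k} C(k,μ)·A(μ+1)·b^{k-μ}·c^{μ+1}
  have hLHS : bcMotzkin01 b c (k + 1) - b * bcMotzkin01 b c k
      = ∑ μ ∈ range (k + 1),
          (Nat.choose k μ : ℝ) * (aeratedCatalan (μ + 1) : ℝ) * b ^ (k - μ) * c ^ (μ + 1) := by
    have hM1 : bcMotzkin01 b c (k + 1)
        = ((∑ μ ∈ range (k + 1),
              (Nat.choose k μ : ℝ) * (aeratedCatalan (μ+1) : ℝ) * b ^ (k - μ) * c ^ (μ+1))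
          + ∑ μ ∈ range (k + 1),
              (Nat.choose k (μ+1) : ℝ) * (aeratedCatalan (μ+1) : ℝ) * b ^ (k - μ) * c ^ (μ+1))
          + b ^ (k + 1) := by
      unfold bcMotzkin01
      rw [Finset.sum_range_succ', ← Finset.sum_add_distrib]
      congr 1
      · apply Finset.sum_congr rfl
        intro μ hμ
        rw [show (k + 1) - (μ + 1) = k - μ from by omega, Nat.choose_succ_succ]
        push_cast
        ring
      · simp [aeratedCatalan]
    have hM0 : b * bcMotzkin01 b c k
        = (∑ μ ∈ range k,
              (Nat.choose k (μ+1) : ℝ) * (aeratedCatalan (μ+1) : ℝ) * b ^ (k - μ) * c ^ (μ+1))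
          + b ^ (k + 1) := by
      unfold bcMotzkin01
      rw [Finset.mul_sum, Finset.sum_range_succ']
      congr 1
      · apply Finset.sum_congr rfl
        intro μ hμ
        simp only [mem_range] at hμ
        rw [show k - μ = (k - (μ + 1)) + 1 from by omega, pow_succ]
        ring
      · simp [aeratedCatalan]
        ring
    have hshrink : (∑ μ ∈ range (k + 1),
          (Nat.choose k (μ+1) : ℝ) * (aeratedCatalan (μ+1) : ℝ) * b ^ (k - μ) * c ^ (μ+1))
        = ∑ μ ∈ range k,
          (Nat.choose k (μ+1) : ℝ) * (aeratedCatalan (μ+1) : ℝ) * b ^ (k - μ) * c ^ (μ+1) := by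
      rw [Finset.sum_range_succ, Nat.choose_succ_self]
      push_cast
      ring
    rw [hM1, hM0, hshrink]
    ring
  rw [hLHS]
  -- k = 0 case
  rcases k with _ | l
  · simp [aeratedCatalan_odd (by decide : ¬ Even 1)]
  simp only [show ∀ x : ℕ, l + 1 + 1 - 2 - x = l - x from fun x => by omega]
  -- Step B: RHS = double sum of F
  have hRHS : c ^ 2 * ∑ α ∈ Finset.range (l + 1),
        bcMotzkin01 b c α * bcMotzkin01 b c (l - α)
      = ∑ i ∈ range (l + 1), ∑ j ∈ range (l + 1),
          (Nat.choose (l + 1) (i + j + 1) : ℝ) * (aeratedCatalan i : ℝ) *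
            (aeratedCatalan j : ℝ) * b ^ (l - i - j) * c ^ (i + j + 2) := by
    have hext : ∀ α ∈ range (l + 1), bcMotzkin01 b c α
        = ∑ i ∈ range (l + 1),
            (Nat.choose α i : ℝ) * (aeratedCatalan i : ℝ) * b ^ (α - i) * c ^ i := by
      intro α hα
      simp only [mem_range] at hα
      unfold bcMotzkin01
      apply Finset.sum_subset
      · intro x hx; simp only [mem_range] at hx ⊢; omega
      · intro x hx hnx
        simp only [mem_range] at hx hnx
        rw [Nat.choose_eq_zero_of_lt (by omega)]
        push_cast
        ring
    rw [Finset.mul_sum]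
    have h1 : ∀ α ∈ range (l + 1),
        c ^ 2 * (bcMotzkin01 b c α * bcMotzkin01 b c (l - α))
          = ∑ i ∈ range (l + 1), ∑ j ∈ range (l + 1),
              c ^ 2 * ((Nat.choose α i : ℝ) * (aeratedCatalan i : ℝ) * b ^ (α - i) * c ^ i)
                * ((Nat.choose (l - α) j : ℝ) * (aeratedCatalan j : ℝ) * b ^ (l - α - j) * c ^ j) := by
      intro α hα
      have hα' : l - α ∈ range (l + 1) := by simp only [mem_range] at hα ⊢; omega
      rw [hext α hα, hext (l - α) hα', Finset.sum_mul_sum, Finset.mul_sum]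
      apply Finset.sum_congr rfl
      intro i _
      rw [Finset.mul_sum]
      apply Finset.sum_congr rfl
      intro j _
      ring
    rw [Finset.sum_congr rfl h1, Finset.sum_comm]
    apply Finset.sum_congr rfl
    intro i _
    rw [Finset.sum_comm]
    apply Finset.sum_congr rfl
    intro j _
    have hhok : ((Nat.choose (l + 1) (i + j + 1) : ℕ) : ℝ)
        = ∑ α ∈ range (l + 1), (Nat.choose α i : ℝ) * (Nat.choose (l - α) j : ℝ) := by
      rw [← hockey l i j]
      push_cast
      rfl
    rw [hhok, Finset.sum_mul, Finset.sum_mul, Finset.sum_mul, Finset.sum_mul]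
    apply Finset.sum_congr rfl
    intro α hα
    simp only [mem_range] at hα
    by_cases hij : i ≤ α ∧ j ≤ l - α
    · have hb : b ^ (α - i) * b ^ (l - α - j) = b ^ (l - i - j) := by
        rw [← pow_add]; congr 1; omega
      have hc : c ^ (i + j + 2) = c ^ i * c ^ j * c ^ 2 := by
        rw [show i + j + 2 = (i + j) + 2 from rfl, pow_add, pow_add]
      rw [hc, ← hb]
      ring
    · rcases not_and_or.mp hij with h | h
      · rw [Nat.choose_eq_zero_of_lt (by omega : α < i)]
        push_cast
        ring
      · rw [Nat.choose_eq_zero_of_lt (by omega : l - α < j)]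
        push_cast
        ring
  rw [hRHS]
  -- Step C: match the two double sums
  have hrec : ∀ μ : ℕ, ((aeratedCatalan (μ + 1) : ℕ) : ℝ)
      = ∑ i ∈ range μ, (aeratedCatalan i : ℝ) * (aeratedCatalan (μ - 1 - i) : ℝ) := by
    intro μ
    rw [aeratedCatalan_rec μ]
    push_cast
    rfl
  have hexp : ∀ μ ∈ range (l + 1 + 1),
      (Nat.choose (l + 1) μ : ℝ) * (aeratedCatalan (μ + 1) : ℝ) * b ^ (l + 1 - μ) * c ^ (μ + 1)
        = ∑ i ∈ range μ,
            (Nat.choose (l + 1) μ : ℝ) * (aeratedCatalan i : ℝ) * (aeratedCatalan (μ - 1 - i) : ℝ)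
              * b ^ (l + 1 - μ) * c ^ (μ + 1) := by
    intro μ _
    rw [hrec μ, Finset.mul_sum, Finset.sum_mul, Finset.sum_mul]
    apply Finset.sum_congr rfl
    intro i _
    ring
  rw [Finset.sum_congr rfl hexp, Finset.sum_sigma', Finset.sum_sigma']
  -- shrink the RHS index set to pairs with i + j ≤ l
  rw [show (∑ x ∈ (range (l + 1)).sigma fun _ => range (l + 1),
        (Nat.choose (l + 1) (x.1 + x.2 + 1) : ℝ) * (aeratedCatalan x.1 : ℝ) *
          (aeratedCatalan x.2 : ℝ) * b ^ (l - x.1 - x.2) * c ^ (x.1 + x.2 + 2))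
      = ∑ x ∈ ((range (l + 1)).sigma fun _ => range (l + 1)).filter
            (fun x => x.1 + x.2 ≤ l),
        (Nat.choose (l + 1) (x.1 + x.2 + 1) : ℝ) * (aeratedCatalan x.1 : ℝ) *
          (aeratedCatalan x.2 : ℝ) * b ^ (l - x.1 - x.2) * c ^ (x.1 + x.2 + 2) from
    (Finset.sum_subset (Finset.filter_subset _ _) (by
      intro x hx hnx
      simp only [Finset.mem_filter, hx, true_and, not_le] at hnx
      rw [Nat.choose_eq_zero_of_lt (by omega : l + 1 < x.1 + x.2 + 1)]
      push_cast
      ring)).symm]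
  apply Finset.sum_nbij' (fun x => (⟨x.2, x.1 - 1 - x.2⟩ : (_ : ℕ) × ℕ))
    (fun y => (⟨y.1 + y.2 + 1, y.1⟩ : (_ : ℕ) × ℕ))
  · intro x hx
    simp only [Finset.mem_sigma, Finset.mem_filter, mem_range] at hx ⊢
    omega
  · intro y hy
    simp only [Finset.mem_sigma, Finset.mem_filter, mem_range] at hy ⊢
    omega
  · intro x hx
    obtain ⟨μ, i⟩ := x
    simp only [Finset.mem_sigma, mem_range] at hx
    simp only [show i + (μ - 1 - i) + 1 = μ from by omega]
  · intro y hy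
    obtain ⟨i, j⟩ := y
    simp only [Finset.mem_sigma, Finset.mem_filter, mem_range] at hy
    simp only [show i + j + 1 - 1 - i = j from by omega]
  · intro x hx
    obtain ⟨μ, i⟩ := x
    simp only [Finset.mem_sigma, mem_range] at hx
    obtain ⟨h1, h2⟩ := hx
    simp only
    rw [show i + (μ - 1 - i) + 1 = μ from by omega,
      show l - i - (μ - 1 - i) = l + 1 - μ from by omega,
      show i + (μ - 1 - i) + 2 = μ + 1 from by omega]
end

section
/- Let b, c be real numbers, let f : ℕ → ℝ be any function, and let n₁, n_j ≥ 1 be natural numbers. Then Σ_{μ₁=1}^{n₁} Σ_{μⱼ=1}^{n_j} binom(n₁−1, μ₁−1)·binom(n_j, μⱼ)·μⱼ·f(μ₁+μⱼ−2)·b^{(n₁+n_j)−(μ₁+μⱼ)}·c^{μ₁+μⱼ} = c²·n_j·Σ_{k=0}^{n₁+n_j−2} binom(n₁+n_j−2, k)·f(k)·b^{(n₁+n_j−2)−k}·c^{k}. -/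
open Finset

lemma rect_eq_diag (g : ℕ → ℕ → ℝ) (m n : ℕ)
    (hg : ∀ a d, m < a ∨ n < d → g a d = 0) :
    ∑ a ∈ Finset.range (m+1), ∑ d ∈ Finset.range (n+1), g a d
      = ∑ k ∈ Finset.range (m+n+1), ∑ ij ∈ Finset.HasAntidiagonal.antidiagonal k, g ij.1 ij.2 := by
  rw [← Finset.sum_product']
  rw [← Finset.sum_biUnion (by
    intro x _ y _ hxy
    simp only [Finset.disjoint_left]
    intro p hp hq
    exact hxy (by rw [← Finset.HasAntidiagonal.mem_antidiagonal.mp hp, Finset.HasAntidiagonal.mem_antidiagonal.mp hq]))]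
  apply Finset.sum_subset
  · intro p hp
    simp only [Finset.mem_product, Finset.mem_range] at hp
    refine Finset.mem_biUnion.mpr ⟨p.1 + p.2, Finset.mem_range.mpr (by omega), ?_⟩
    simp [Finset.HasAntidiagonal.mem_antidiagonal]
  · intro p _ hp
    simp only [Finset.mem_product, Finset.mem_range] at hp
    exact hg p.1 p.2 (by omega)

/-- The "Term I" identity in the algebraic proof of the generalized `bc`-Motzkin
recursion: for real `b, c`, any `f : ℕ → ℝ`, and natural numbers `n₁, n_j ≥ 1`,
`∑_{μ₁=1}^{n₁} ∑_{μⱼ=1}^{n_j} binom(n₁−1,μ₁−1)·binom(n_j,μⱼ)·μⱼ·f(μ₁+μⱼ−2)·b^{(n₁+n_j)−(μ₁+μⱼ)}·c^{μ₁+μⱼ}`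
`= c²·n_j·∑_{k=0}^{n₁+n_j−2} binom(n₁+n_j−2,k)·f(k)·b^{(n₁+n_j−2)−k}·c^{k}`. -/
theorem bcMotzkin_termI (b c : ℝ) (f : ℕ → ℝ) (n₁ nj : ℕ) (h₁ : 1 ≤ n₁) (hj : 1 ≤ nj) :
    ∑ μ₁ ∈ Finset.Icc 1 n₁, ∑ μj ∈ Finset.Icc 1 nj,
        (Nat.choose (n₁ - 1) (μ₁ - 1) : ℝ) * (Nat.choose nj μj : ℝ) * (μj : ℝ)
          * f (μ₁ + μj - 2) * b ^ ((n₁ + nj) - (μ₁ + μj)) * c ^ (μ₁ + μj)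
      = c ^ 2 * (nj : ℝ) * ∑ k ∈ Finset.range ((n₁ + nj - 2) + 1),
          (Nat.choose (n₁ + nj - 2) k : ℝ) * f k * b ^ ((n₁ + nj - 2) - k) * c ^ k := by
  obtain ⟨m, rfl⟩ : ∃ m, n₁ = m + 1 := ⟨n₁ - 1, by omega⟩
  obtain ⟨n, rfl⟩ : ∃ n, nj = n + 1 := ⟨nj - 1, by omega⟩
  have hmn : m + 1 + (n + 1) - 2 = m + n := by omega
  rw [hmn]
  set g : ℕ → ℕ → ℝ := fun a d =>
    (Nat.choose m a : ℝ) * (Nat.choose n d : ℝ) * f (a + d) * b ^ (m + n - (a + d)) * c ^ (a + d)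
    with hg
  have key : ∀ a d : ℕ,
      (Nat.choose m a : ℝ) * (Nat.choose (n+1) (d+1) : ℝ) * ((d+1 : ℕ) : ℝ)
        * f (a + d) * b ^ (m + n - (a + d)) * c ^ (a + d + 2)
      = c ^ 2 * (n + 1 : ℝ) * g a d := by
    intro a d
    have hN : (n+1).choose (d+1) * (d+1) = (n+1) * n.choose d := (Nat.add_one_mul_choose_eq n d).symm
    have h : ((Nat.choose (n+1) (d+1) : ℝ)) * ((d+1 : ℕ) : ℝ) = ((n:ℝ)+1) * (Nat.choose n d : ℝ) := by
      exact_mod_cast congrArg (Nat.cast : ℕ → ℝ) hN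
    simp only [hg]
    rw [pow_add]
    push_cast at h ⊢
    linear_combination ((m.choose a : ℝ) * f (a+d) * b ^ (m+n-(a+d)) * c ^ (a+d) * c^2) * h
  have L1 : ∑ μ₁ ∈ Finset.Icc 1 (m+1), ∑ μj ∈ Finset.Icc 1 (n+1),
        (Nat.choose (m + 1 - 1) (μ₁ - 1) : ℝ) * (Nat.choose (n+1) μj : ℝ) * (μj : ℝ)
          * f (μ₁ + μj - 2) * b ^ ((m + 1 + (n + 1)) - (μ₁ + μj)) * c ^ (μ₁ + μj)
      = ∑ a ∈ Finset.range (m+1), ∑ d ∈ Finset.range (n+1), c ^ 2 * ((n:ℝ)+1) * g a d := by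
    rw [← Finset.Ico_add_one_right_eq_Icc, Finset.sum_Ico_eq_sum_range]
    simp only [Nat.succ_sub_one, Nat.add_sub_cancel]
    refine Finset.sum_congr rfl fun a _ => ?_
    rw [← Finset.Ico_add_one_right_eq_Icc, Finset.sum_Ico_eq_sum_range]
    simp only [Nat.succ_sub_one, Nat.add_sub_cancel]
    refine Finset.sum_congr rfl fun d _ => ?_
    have e0 : m + 1 - 1 = m := by omega
    have e1 : 1 + a - 1 = a := by omega
    have e2 : 1 + a + (1 + d) - 2 = a + d := by omega
    have e3 : m + 1 + (n + 1) - (1 + a + (1 + d)) = m + n - (a + d) := by omega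
    have e4 : 1 + a + (1 + d) = a + d + 2 := by omega
    have e5 : 1 + d = d + 1 := by omega
    rw [e1, e2, e3, e4, e5]
    exact_mod_cast key a d
  rw [L1]
  simp only [← Finset.mul_sum]
  rw [rect_eq_diag g m n (by
    intro a d had
    simp only [hg]
    rcases had with h | h <;> rw [Nat.choose_eq_zero_of_lt h] <;> simp)]
  have eqsum : ∑ k ∈ Finset.range (m+n+1), ∑ ij ∈ Finset.HasAntidiagonal.antidiagonal k, g ij.1 ij.2
      = ∑ k ∈ Finset.range (m+n+1), (Nat.choose (m+n) k : ℝ) * f k * b ^ (m+n-k) * c ^ k := by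
    refine Finset.sum_congr rfl fun k hk => ?_
    have : ∑ ij ∈ Finset.HasAntidiagonal.antidiagonal k, g ij.1 ij.2
        = ∑ ij ∈ Finset.HasAntidiagonal.antidiagonal k, ((Nat.choose m ij.1 * Nat.choose n ij.2 : ℕ) : ℝ)
            * (f k * b ^ (m + n - k) * c ^ k) := by
      refine Finset.sum_congr rfl fun ij hij => ?_
      have hij' : ij.1 + ij.2 = k := Finset.HasAntidiagonal.mem_antidiagonal.mp hij
      simp only [hg, hij']
      push_cast
      ring
    rw [this, ← Finset.sum_mul, ← Nat.cast_sum, ← Nat.add_choose_eq]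
    ring
  rw [eqsum]
  push_cast
  ring
end

section
/- Let b, c be real numbers, let g : ℕ × ℕ → ℝ be any function, and let n ≥ 2 be a natural number. Then Σ_{μ=2}^{n} binom(n−1, μ−1)·( Σ_{α+β=μ−2} g(α,β) )·b^{n−μ}·c^{μ} = c²·Σ_{ζ+ξ=n−2} Σ_{α=0}^{ζ} Σ_{β=0}^{ξ} binom(ζ,α)·binom(ξ,β)·g(α,β)·b^{(ζ+ξ)−(α+β)}·c^{α+β}, where the sums over α+β=μ−2 and over ζ+ξ=n−2 range over pairs of nonnegative integers with the indicated sums. -/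
open Finset

private lemma hockey_s7 (m a : ℕ) :
    ∑ i ∈ range (m + 1), i.choose a = (m + 1).choose (a + 1) := by
  rw [← Nat.sum_Icc_choose]
  exact (Finset.sum_subset
    (fun x hx => by simp only [mem_Icc] at hx; exact mem_range.2 (by omega))
    (fun x hx hx' => by
      simp only [mem_range] at hx; simp only [mem_Icc] at hx'
      exact Nat.choose_eq_zero_of_lt (by omega))).symm

private lemma vand (a e : ℕ) : ∀ m : ℕ,
    ∑ p ∈ Finset.HasAntidiagonal.antidiagonal m, p.1.choose a * p.2.choose e
      = (m + 1).choose (a + e + 1) := by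
  induction e with
  | zero =>
    intro m
    rw [Finset.Nat.sum_antidiagonal_eq_sum_range_succ_mk]
    simp only [Nat.choose_zero_right, mul_one]
    rw [hockey_s7]
  | succ e ih =>
    intro m
    induction m with
    | zero =>
      simp [Nat.choose_eq_zero_of_lt (show 1 < a + (e + 1) + 1 by omega)]
    | succ m ihm =>
      rw [Finset.Nat.sum_antidiagonal_succ']
      have h1 : ∀ p : ℕ × ℕ, p.1.choose a * (p.2 + 1).choose (e + 1)
          = p.1.choose a * p.2.choose e + p.1.choose a * p.2.choose (e + 1) := by
        intro p; rw [Nat.choose_succ_succ, mul_add]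
      simp only [h1]
      rw [Finset.sum_add_distrib, ih m, ihm]
      rw [show a + (e + 1) + 1 = (a + e + 1) + 1 by omega,
        Nat.choose_succ_succ (m + 1) (a + e + 1)]
      simp [Nat.choose_eq_zero_of_lt (Nat.succ_pos e)]

/-- The "Term III" splitting identity in the algebraic proof of the generalized
`bc`-Motzkin recursion: for real `b, c`, any `g : ℕ × ℕ → ℝ`, and `n ≥ 2`,
`∑_{μ=2}^{n} binom(n−1,μ−1)·(∑_{α+β=μ−2} g(α,β))·b^{n−μ}·c^{μ}`
`= c²·∑_{ζ+ξ=n−2} ∑_{α=0}^{ζ} ∑_{β=0}^{ξ} binom(ζ,α)·binom(ξ,β)·g(α,β)·b^{(ζ+ξ)−(α+β)}·c^{α+β}`. -/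
theorem bcMotzkin_termIII (b c : ℝ) (g : ℕ × ℕ → ℝ) (n : ℕ) (hn : 2 ≤ n) :
    ∑ μ ∈ Finset.Icc 2 n,
        (Nat.choose (n - 1) (μ - 1) : ℝ)
          * (∑ p ∈ Finset.HasAntidiagonal.antidiagonal (μ - 2), g p) * b ^ (n - μ) * c ^ μ
      = c ^ 2 * ∑ p ∈ Finset.HasAntidiagonal.antidiagonal (n - 2),
          ∑ α ∈ Finset.range (p.1 + 1), ∑ β ∈ Finset.range (p.2 + 1),
            (Nat.choose p.1 α : ℝ) * (Nat.choose p.2 β : ℝ) * g (α, β)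
              * b ^ ((p.1 + p.2) - (α + β)) * c ^ (α + β) := by
  obtain ⟨N, rfl⟩ : ∃ N, n = 2 + N := ⟨n - 2, by omega⟩
  set S : Finset (ℕ × ℕ) :=
    (range (N + 1) ×ˢ range (N + 1)).filter (fun p => p.1 + p.2 ≤ N) with hS
  set F : ℕ × ℕ → ℝ := fun p =>
    ((N + 1).choose (p.1 + p.2 + 1) : ℝ) * g p * b ^ (N - (p.1 + p.2))
      * c ^ (p.1 + p.2 + 2) with hF
  have hLHS : ∑ μ ∈ Finset.Icc 2 (2 + N),
        (Nat.choose (2 + N - 1) (μ - 1) : ℝ)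
          * (∑ p ∈ Finset.HasAntidiagonal.antidiagonal (μ - 2), g p) * b ^ (2 + N - μ) * c ^ μ
      = ∑ p ∈ S, F p := by
    rw [← Finset.Ico_add_one_right_eq_Icc, Finset.sum_Ico_eq_sum_range]
    have hcard : 2 + N + 1 - 2 = N + 1 := by omega
    rw [hcard]
    have step1 : ∀ i ∈ range (N + 1),
        (Nat.choose (2 + N - 1) (2 + i - 1) : ℝ)
            * (∑ p ∈ Finset.HasAntidiagonal.antidiagonal (2 + i - 2), g p) * b ^ (2 + N - (2 + i))
            * c ^ (2 + i)
          = ∑ p ∈ Finset.HasAntidiagonal.antidiagonal i, F p := by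
      intro i hi
      have h1 : 2 + N - 1 = N + 1 := by omega
      have h2 : 2 + i - 1 = i + 1 := by omega
      have h3 : 2 + i - 2 = i := by omega
      have h4 : 2 + N - (2 + i) = N - i := by omega
      have h5 : 2 + i = i + 2 := by omega
      rw [h1, h2, h3, h4, h5, mul_sum, sum_mul, sum_mul]
      refine Finset.sum_congr rfl (fun p hp => ?_)
      rw [Finset.HasAntidiagonal.mem_antidiagonal] at hp
      simp [hF, hp]
    rw [Finset.sum_congr rfl step1]
    have hmap : ∀ p ∈ S, p.1 + p.2 ∈ range (N + 1) := by
      intro p hp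
      simp only [hS, mem_filter] at hp
      exact mem_range.2 (by omega)
    rw [← Finset.sum_fiberwise_of_maps_to hmap F]
    refine Finset.sum_congr rfl (fun i hi => ?_)
    rw [mem_range] at hi
    congr 1
    ext p
    simp only [Finset.HasAntidiagonal.mem_antidiagonal, hS, mem_filter, mem_product, mem_range]
    omega
  have hRHS : ∑ p ∈ Finset.HasAntidiagonal.antidiagonal (2 + N - 2),
          ∑ α ∈ Finset.range (p.1 + 1), ∑ β ∈ Finset.range (p.2 + 1),
            (Nat.choose p.1 α : ℝ) * (Nat.choose p.2 β : ℝ) * g (α, β)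
              * b ^ ((p.1 + p.2) - (α + β)) * c ^ (α + β)
      = ∑ q ∈ range (N + 1) ×ˢ range (N + 1),
          ((N + 1).choose (q.1 + q.2 + 1) : ℝ) * g q * b ^ (N - (q.1 + q.2))
            * c ^ (q.1 + q.2) := by
    have h0 : 2 + N - 2 = N := by omega
    rw [h0]
    have step1 : ∀ p ∈ Finset.HasAntidiagonal.antidiagonal N,
        (∑ α ∈ Finset.range (p.1 + 1), ∑ β ∈ Finset.range (p.2 + 1),
            (Nat.choose p.1 α : ℝ) * (Nat.choose p.2 β : ℝ) * g (α, β)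
              * b ^ ((p.1 + p.2) - (α + β)) * c ^ (α + β))
          = ∑ q ∈ range (N + 1) ×ˢ range (N + 1),
              (Nat.choose p.1 q.1 : ℝ) * (Nat.choose p.2 q.2 : ℝ) * g q
                * b ^ (N - (q.1 + q.2)) * c ^ (q.1 + q.2) := by
      intro p hp
      rw [Finset.HasAntidiagonal.mem_antidiagonal] at hp
      calc ∑ α ∈ Finset.range (p.1 + 1), ∑ β ∈ Finset.range (p.2 + 1),
            (Nat.choose p.1 α : ℝ) * (Nat.choose p.2 β : ℝ) * g (α, β)
              * b ^ ((p.1 + p.2) - (α + β)) * c ^ (α + β)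
          = ∑ α ∈ Finset.range (N + 1), ∑ β ∈ Finset.range (p.2 + 1),
              (Nat.choose p.1 α : ℝ) * (Nat.choose p.2 β : ℝ) * g (α, β)
                * b ^ ((p.1 + p.2) - (α + β)) * c ^ (α + β) := by
            apply Finset.sum_subset
            · intro α hα; rw [mem_range] at hα ⊢; omega
            · intro α hα hα'
              rw [mem_range] at hα hα'
              refine Finset.sum_eq_zero (fun β hβ => ?_)
              rw [Nat.choose_eq_zero_of_lt (show p.1 < α by omega)]
              simp
        _ = ∑ α ∈ Finset.range (N + 1), ∑ β ∈ Finset.range (N + 1),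
              (Nat.choose p.1 α : ℝ) * (Nat.choose p.2 β : ℝ) * g (α, β)
                * b ^ ((p.1 + p.2) - (α + β)) * c ^ (α + β) := by
            refine Finset.sum_congr rfl (fun α hα => ?_)
            apply Finset.sum_subset
            · intro β hβ; rw [mem_range] at hβ ⊢; omega
            · intro β hβ hβ'
              rw [mem_range] at hβ hβ'
              rw [Nat.choose_eq_zero_of_lt (show p.2 < β by omega)]
              simp
        _ = ∑ q ∈ range (N + 1) ×ˢ range (N + 1),
              (Nat.choose p.1 q.1 : ℝ) * (Nat.choose p.2 q.2 : ℝ) * g q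
                * b ^ ((p.1 + p.2) - (q.1 + q.2)) * c ^ (q.1 + q.2) :=
            by rw [Finset.sum_product]
        _ = ∑ q ∈ range (N + 1) ×ˢ range (N + 1),
              (Nat.choose p.1 q.1 : ℝ) * (Nat.choose p.2 q.2 : ℝ) * g q
                * b ^ (N - (q.1 + q.2)) * c ^ (q.1 + q.2) := by
            rw [hp]
    rw [Finset.sum_congr rfl step1, Finset.sum_comm]
    refine Finset.sum_congr rfl (fun q hq => ?_)
    have hv := vand q.1 q.2 N
    calc ∑ p ∈ Finset.HasAntidiagonal.antidiagonal N,
          (Nat.choose p.1 q.1 : ℝ) * (Nat.choose p.2 q.2 : ℝ) * g q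
            * b ^ (N - (q.1 + q.2)) * c ^ (q.1 + q.2)
        = (∑ p ∈ Finset.HasAntidiagonal.antidiagonal N,
            (Nat.choose p.1 q.1 : ℝ) * (Nat.choose p.2 q.2 : ℝ))
            * (g q * b ^ (N - (q.1 + q.2)) * c ^ (q.1 + q.2)) := by
          rw [Finset.sum_mul]; exact Finset.sum_congr rfl (fun p hp => by ring)
      _ = ((N + 1).choose (q.1 + q.2 + 1) : ℝ) * g q * b ^ (N - (q.1 + q.2))
            * c ^ (q.1 + q.2) := by
          push_cast [← hv]
          ring
  have hfin : ∑ q ∈ S, F q = ∑ q ∈ range (N + 1) ×ˢ range (N + 1), F q := by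
    apply Finset.sum_subset (Finset.filter_subset _ _)
    intro q hq hq'
    simp only [hS, mem_filter, hq, true_and, not_le] at hq'
    simp [hF, Nat.choose_eq_zero_of_lt (show N + 1 < q.1 + q.2 + 1 by omega)]
  rw [hLHS, hRHS, Finset.mul_sum, hfin]
  refine Finset.sum_congr rfl (fun q hq => ?_)
  simp only [hF]
  rw [show q.1 + q.2 + 2 = 2 + (q.1 + q.2) by omega, pow_add]
  ring
end

section
/- Let b, c be real numbers with c ≠ 0, and define x(t) = 2c·(t²+1)/(t²−1) + b for real (or complex) t with t² ≠ 1, so that x'(t) = −8ct/(t²−1)². Then for all t₁, t₂ with t₁² ≠ 1, t₂² ≠ 1, t₁ ≠ t₂, and t₁ ≠ −t₂: (x'(t₁)·x'(t₂))/((x(t₁)−x(t₂))²) = 1/(t₁−t₂)² − 1/(t₁+t₂)². Equivalently, 1/(t₁−t₂)² − (x'(t₁)·x'(t₂))/((x(t₁)−x(t₂))²) = 1/(t₁+t₂)². -/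
/-- The spectral-curve change of variable `x(t) = 2c·(t²+1)/(t²−1) + b`. -/
noncomputable def xSpec (b c t : ℝ) : ℝ := 2 * c * (t ^ 2 + 1) / (t ^ 2 - 1) + b

/-- The derivative `x'(t) = −8ct/(t²−1)²` of the change of variable. -/
noncomputable def xSpecDeriv (c t : ℝ) : ℝ := -8 * c * t / (t ^ 2 - 1) ^ 2

/-- For `x(t) = 2c·(t²+1)/(t²−1) + b` with `c ≠ 0` one has
`x'(t) = −8ct/(t²−1)²`, and for all `t₁, t₂` with `t₁² ≠ 1`, `t₂² ≠ 1`,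
`t₁ ≠ t₂`, `t₁ ≠ −t₂`:
`(x'(t₁)·x'(t₂))/((x(t₁)−x(t₂))²) = 1/(t₁−t₂)² − 1/(t₁+t₂)²`, equivalently
`1/(t₁−t₂)² − (x'(t₁)·x'(t₂))/((x(t₁)−x(t₂))²) = 1/(t₁+t₂)²`. -/
theorem pulled_back_cauchy_kernel (b c : ℝ) (hc : c ≠ 0) (t₁ t₂ : ℝ)
    (h₁ : t₁ ^ 2 ≠ 1) (h₂ : t₂ ^ 2 ≠ 1) (h₁₂ : t₁ ≠ t₂) (h₁₂' : t₁ ≠ -t₂) :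
    (∀ t : ℝ, t ^ 2 ≠ 1 → HasDerivAt (fun s => xSpec b c s) (xSpecDeriv c t) t)
    ∧ (xSpecDeriv c t₁ * xSpecDeriv c t₂) / (xSpec b c t₁ - xSpec b c t₂) ^ 2
        = 1 / (t₁ - t₂) ^ 2 - 1 / (t₁ + t₂) ^ 2
    ∧ 1 / (t₁ - t₂) ^ 2
        - (xSpecDeriv c t₁ * xSpecDeriv c t₂) / (xSpec b c t₁ - xSpec b c t₂) ^ 2
        = 1 / (t₁ + t₂) ^ 2 := by
  have d1 : t₁ ^ 2 - 1 ≠ 0 := sub_ne_zero.mpr h₁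
  have d2 : t₂ ^ 2 - 1 ≠ 0 := sub_ne_zero.mpr h₂
  have hm : t₁ - t₂ ≠ 0 := sub_ne_zero.mpr h₁₂
  have hp : t₁ + t₂ ≠ 0 := fun h => h₁₂' (by linarith [h])
  have hdiff : xSpec b c t₁ - xSpec b c t₂
      = -4 * c * ((t₁ - t₂) * (t₁ + t₂)) / ((t₁ ^ 2 - 1) * (t₂ ^ 2 - 1)) := by
    unfold xSpec
    field_simp
    ring
  have key : (xSpecDeriv c t₁ * xSpecDeriv c t₂) / (xSpec b c t₁ - xSpec b c t₂) ^ 2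
      = 1 / (t₁ - t₂) ^ 2 - 1 / (t₁ + t₂) ^ 2 := by
    rw [hdiff]
    unfold xSpecDeriv
    field_simp
    ring
  refine ⟨?_, key, by rw [key]; ring⟩
  intro t ht
  have dt : t ^ 2 - 1 ≠ 0 := sub_ne_zero.mpr ht
  have h1 : HasDerivAt (fun s : ℝ => 2 * c * (s ^ 2 + 1)) (2 * c * (2 * t)) t := by
    have := ((hasDerivAt_pow 2 t).add_const 1).const_mul (2 * c)
    simpa using this
  have h2 : HasDerivAt (fun s : ℝ => s ^ 2 - 1) (2 * t) t := by
    have := (hasDerivAt_pow 2 t).sub_const 1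
    simpa using this
  have := (h1.div h2 dt).add_const b
  refine this.congr_deriv ?_
  unfold xSpecDeriv
  field_simp
  ring
end
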